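/- Let H be a k-uniform hypergraph family with Turán density π(H) > 0. Then the codegree squared density satisfies σ(H) ≤ π(H)·(π(H)/k + 1 − 1/k). -/

import Mathlib

open Filter Finset

/-!
Auxiliary development: an elementary proof (via the "up/down" operators on set levels of the
Boolean lattice, an sl₂-style commutation identity, and Cauchy–Schwarz) of the Bey/de Caen-type
inequality
  `co₂(G) ≤ (k-1)(n-k)·e(G) + n·e(G)²/C(n,k)`
valid for every `k`-uniform hypergraph `G` on `n ≥ k` vertices, where `co₂` is the sum of squared
codegrees of `(k-1)`-sets. Combined with `e(G) ≤ ex(n)` for pattern-free `G` and elementary limit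
computations, this yields the codegree-squared density bound `σ ≤ π(π/k + 1 - 1/k)`.
-/


/-- Number of `t`-subsets of `Fin n` containing a fixed set `S` with `S.card ≤ t`. -/
lemma card_filter_superset {n : ℕ} (t : ℕ) (S : Finset (Fin n)) (h : S.card ≤ t) :
    (((univ : Finset (Fin n)).powersetCard t).filter (fun B => S ⊆ B)).card
      = (n - S.card).choose (t - S.card) := by
  have key : (((univ : Finset (Fin n)).powersetCard t).filter (fun B => S ⊆ B)).card
      = ((univ \ S).powersetCard (t - S.card)).card := by
    apply Finset.card_bij' (fun B _ => B \ S) (fun C _ => C ∪ S)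
    · intro B hB
      simp only [mem_filter, Finset.mem_powersetCard] at hB
      simp only [Finset.mem_powersetCard]
      refine ⟨sdiff_subset_sdiff hB.1.1 (le_refl S), ?_⟩
      rw [card_sdiff_of_subset hB.2, hB.1.2]
    · intro C hC
      simp only [Finset.mem_powersetCard] at hC
      have hdisj : Disjoint C S := by
        rw [Finset.disjoint_left]
        intro x hx hxS
        exact (Finset.mem_sdiff.mp (hC.1 hx)).2 hxS
      simp only [mem_filter, Finset.mem_powersetCard]
      refine ⟨⟨subset_univ _, ?_⟩, subset_union_right⟩
      rw [card_union_of_disjoint hdisj, hC.2]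
      omega
    · intro B hB
      simp only [mem_filter, Finset.mem_powersetCard] at hB
      exact sdiff_union_of_subset hB.2
    · intro C hC
      simp only [Finset.mem_powersetCard] at hC
      have hdisj : Disjoint C S := by
        rw [Finset.disjoint_left]
        intro x hx hxS
        exact (Finset.mem_sdiff.mp (hC.1 hx)).2 hxS
      exact union_sdiff_cancel_right hdisj
  rw [key, Finset.card_powersetCard, card_sdiff_of_subset (subset_univ S), card_univ, Fintype.card_fin]

/-- No `t`-subset contains a set bigger than `t`. -/
lemma card_filter_superset_zero {n : ℕ} (t : ℕ) (S : Finset (Fin n)) (h : t < S.card) :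
    (((univ : Finset (Fin n)).powersetCard t).filter (fun B => S ⊆ B)).card = 0 := by
  rw [Finset.card_eq_zero, Finset.filter_eq_empty_iff]
  intro B hB hSB
  simp only [Finset.mem_powersetCard] at hB
  have := Finset.card_le_card hSB
  omega


/-- Summation exchange for subset-incidences. -/
lemma swap_sum {n : ℕ} (s t : Finset (Finset (Fin n))) (F : Finset (Fin n) → Finset (Fin n) → ℝ) :
    ∑ C ∈ s, ∑ A ∈ t.filter (fun A => C ⊆ A), F C A
      = ∑ A ∈ t, ∑ C ∈ s.filter (fun C => C ⊆ A), F C A := by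
  simp_rw [Finset.sum_filter]
  exact Finset.sum_comm

/-- Subsets of `A` of given size, as a filter of the full level. -/
lemma filter_subset_eq {n : ℕ} (j : ℕ) (A : Finset (Fin n)) :
    ((univ : Finset (Fin n)).powersetCard j).filter (fun C => C ⊆ A) = A.powersetCard j := by
  ext C
  simp only [mem_filter, Finset.mem_powersetCard]
  constructor
  · rintro ⟨⟨-, h2⟩, h3⟩; exact ⟨h3, h2⟩
  · rintro ⟨h1, h2⟩; exact ⟨⟨subset_univ _, h2⟩, h1⟩

/-- The "down" operator: sum over supersets at level `t`. -/
noncomputable def dOp (n t : ℕ) (g : Finset (Fin n) → ℝ) (C : Finset (Fin n)) : ℝ :=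
  ∑ A ∈ ((univ : Finset (Fin n)).powersetCard t).filter (fun A => C ⊆ A), g A

/-- The "up" operator: sum over subsets at level `j`. -/
noncomputable def uOp (n j : ℕ) (h : Finset (Fin n) → ℝ) (B : Finset (Fin n)) : ℝ :=
  ∑ C ∈ ((univ : Finset (Fin n)).powersetCard j).filter (fun C => C ⊆ B), h C

/-- Writing a double incidence sum as a count-weighted single sum. -/
lemma double_to_count {n : ℕ} (t r : ℕ) (h : Finset (Fin n) → ℝ) (C : Finset (Fin n)) :
    (∑ B ∈ ((univ : Finset (Fin n)).powersetCard t).filter (fun B => C ⊆ B),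
      ∑ C₂ ∈ ((univ : Finset (Fin n)).powersetCard r).filter (fun C₂ => C₂ ⊆ B), h C₂)
    = ∑ C₂ ∈ (univ : Finset (Fin n)).powersetCard r,
        ((((univ : Finset (Fin n)).powersetCard t).filter (fun B => C ∪ C₂ ⊆ B)).card : ℝ) * h C₂ := by
  rw [Finset.sum_filter]
  have step : ∀ B ∈ (univ : Finset (Fin n)).powersetCard t,
      (if C ⊆ B then
        (∑ C₂ ∈ ((univ : Finset (Fin n)).powersetCard r).filter (fun C₂ => C₂ ⊆ B), h C₂) else 0)
      = ∑ C₂ ∈ (univ : Finset (Fin n)).powersetCard r, (if C ∪ C₂ ⊆ B then h C₂ else 0) := by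
    intro B _
    by_cases hCB : C ⊆ B
    · rw [if_pos hCB, Finset.sum_filter]
      apply Finset.sum_congr rfl
      intro C₂ _
      congr 1
      simp [Finset.union_subset_iff, hCB]
    · rw [if_neg hCB]
      symm
      apply Finset.sum_eq_zero
      intro C₂ _
      rw [if_neg]
      intro hc
      exact hCB (Finset.union_subset_iff.mp hc).1
  rw [Finset.sum_congr rfl step, Finset.sum_comm]
  apply Finset.sum_congr rfl
  intro C₂ _
  rw [← Finset.sum_filter, Finset.sum_const, nsmul_eq_mul]

/-- Analogue of `double_to_count` for sub-then-super sums. -/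
lemma double_to_count' {n : ℕ} (j r : ℕ) (h : Finset (Fin n) → ℝ) (C : Finset (Fin n)) :
    (∑ C' ∈ ((univ : Finset (Fin n)).powersetCard j).filter (fun C' => C' ⊆ C),
      ∑ C₂ ∈ ((univ : Finset (Fin n)).powersetCard r).filter (fun C₂ => C' ⊆ C₂), h C₂)
    = ∑ C₂ ∈ (univ : Finset (Fin n)).powersetCard r,
        (((C ∩ C₂).card.choose j : ℝ)) * h C₂ := by
  have step : ∀ C' ∈ ((univ : Finset (Fin n)).powersetCard j).filter (fun C' => C' ⊆ C),
      (∑ C₂ ∈ ((univ : Finset (Fin n)).powersetCard r).filter (fun C₂ => C' ⊆ C₂), h C₂)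
      = ∑ C₂ ∈ (univ : Finset (Fin n)).powersetCard r, (if C' ⊆ C₂ then h C₂ else 0) := by
    intro C' _
    rw [Finset.sum_filter]
  rw [Finset.sum_congr rfl step, Finset.sum_comm]
  apply Finset.sum_congr rfl
  intro C₂ _
  have : ∀ C' ∈ ((univ : Finset (Fin n)).powersetCard j).filter (fun C' => C' ⊆ C),
      (if C' ⊆ C₂ then h C₂ else 0) = if C' ⊆ C₂ then h C₂ else 0 := fun _ _ => rfl
  rw [show (∑ C' ∈ ((univ : Finset (Fin n)).powersetCard j).filter (fun C' => C' ⊆ C),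
      if C' ⊆ C₂ then h C₂ else 0)
      = ∑ C' ∈ (((univ : Finset (Fin n)).powersetCard j).filter (fun C' => C' ⊆ C)).filter
          (fun C' => C' ⊆ C₂), h C₂ from (Finset.sum_filter _ _).symm]
  rw [Finset.filter_filter]
  have hset : (((univ : Finset (Fin n)).powersetCard j).filter (fun C' => C' ⊆ C ∧ C' ⊆ C₂))
      = (C ∩ C₂).powersetCard j := by
    rw [← filter_subset_eq j (C ∩ C₂)]
    apply Finset.filter_congr
    intro x _
    simp [Finset.subset_inter_iff]
  rw [hset, Finset.sum_const, nsmul_eq_mul, Finset.card_powersetCard]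

/-- Commutator identity `D ∘ U = U ∘ D + (n − 2(j+1)) id` at level `j+1`. -/
lemma du_comm {n : ℕ} (j : ℕ) (h : Finset (Fin n) → ℝ) (C : Finset (Fin n))
    (hC : C ∈ (univ : Finset (Fin n)).powersetCard (j+1)) :
    dOp n (j+2) (uOp n (j+1) h) C
      = uOp n j (dOp n (j+1) h) C + ((n : ℝ) - 2*(j+1)) * h C := by
  simp only [Finset.mem_powersetCard] at hC
  have hCcard : C.card = j + 1 := hC.2
  have hCn : j + 1 ≤ n := by
    have := Finset.card_le_card hC.1
    simpa [card_univ, hCcard] using this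
  have lhs_eq : dOp n (j+2) (uOp n (j+1) h) C
      = ∑ C₂ ∈ (univ : Finset (Fin n)).powersetCard (j+1),
        ((((univ : Finset (Fin n)).powersetCard (j+2)).filter
          (fun B => C ∪ C₂ ⊆ B)).card : ℝ) * h C₂ := by
    rw [dOp]
    exact double_to_count (j+2) (j+1) h C
  have rhs_eq : uOp n j (dOp n (j+1) h) C
      = ∑ C₂ ∈ (univ : Finset (Fin n)).powersetCard (j+1),
        (((C ∩ C₂).card.choose j : ℝ)) * h C₂ := by
    rw [uOp]
    exact double_to_count' j (j+1) h C
  rw [lhs_eq, rhs_eq]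
  have point : ∀ C₂ ∈ (univ : Finset (Fin n)).powersetCard (j+1),
      ((((univ : Finset (Fin n)).powersetCard (j+2)).filter
          (fun B => C ∪ C₂ ⊆ B)).card : ℝ) * h C₂
      = (((C ∩ C₂).card.choose j : ℝ)) * h C₂
        + (if C₂ = C then ((n : ℝ) - 2*(j+1)) * h C else 0) := by
    intro C₂ hC₂
    simp only [Finset.mem_powersetCard] at hC₂
    have hC₂card : C₂.card = j + 1 := hC₂.2
    by_cases heq : C₂ = C
    · subst heq
      rw [if_pos rfl, Finset.union_self, Finset.inter_self]
      have hcnt := card_filter_superset (n := n) (j+2) C₂ (by omega)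
      rw [hcnt, hC₂card]
      have h1 : j + 2 - (j+1) = 1 := by omega
      have h1' : n - (j+1) = n - C₂.card := by rw [hC₂card]
      rw [h1, Nat.choose_one_right]
      have h3 : (j+1).choose j = j + 1 := by
        have := Nat.choose_symm (n := j+1) (k := 1) (by omega)
        simpa using this.symm
      have hcast : ((n - (j+1) : ℕ) : ℝ) = (n : ℝ) - (j+1) := by
        have h5 : (j : ℝ) + 1 = ((j + 1 : ℕ) : ℝ) := by push_cast; ring
        rw [h5, ← Nat.cast_sub hCn]
      rw [h3, hcast]
      push_cast
      ring
    · rw [if_neg heq, add_zero]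
      congr 1
      -- u := (C ∪ C₂).card ≥ j+2
      have hcards : (C ∪ C₂).card + (C ∩ C₂).card = (j+1) + (j+1) := by
        rw [Finset.card_union_add_card_inter, hCcard, hC₂card]
      have hu : j + 2 ≤ (C ∪ C₂).card := by
        by_contra hlt
        push_neg at hlt
        have hsub : C ⊆ C ∪ C₂ := Finset.subset_union_left
        have : C = C ∪ C₂ := Finset.eq_of_subset_of_card_le hsub (by omega)
        have : C₂ ⊆ C := by rw [this]; exact Finset.subset_union_right
        exact heq (Finset.eq_of_subset_of_card_le this (by omega))
      rcases eq_or_lt_of_le hu with huEq | huLt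
      · rw [card_filter_superset (j+2) (C ∪ C₂) (by omega)]
        rw [← huEq]
        have : (C ∩ C₂).card = j := by omega
        simp [this, Nat.sub_self]
      · rw [card_filter_superset_zero (j+2) (C ∪ C₂) huLt]
        have : (C ∩ C₂).card < j := by omega
        rw [Nat.choose_eq_zero_of_lt this]
  rw [Finset.sum_congr rfl point, Finset.sum_add_distrib]
  congr 1
  rw [Finset.sum_ite_eq' ((univ : Finset (Fin n)).powersetCard (j+1)) C
    (fun _ => ((n : ℝ) - 2*(j+1)) * h C)]
  rw [if_pos (by simp [Finset.mem_powersetCard, hCcard, hC.1])]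

/-- Mean-zero down-sum computation: the sum of the down operator over the whole level. -/
lemma dOp_total {n : ℕ} (j : ℕ) (g : Finset (Fin n) → ℝ) :
    ∑ C ∈ (univ : Finset (Fin n)).powersetCard j, dOp n (j+1) g C
      = (j+1) * ∑ A ∈ (univ : Finset (Fin n)).powersetCard (j+1), g A := by
  simp only [dOp]
  rw [swap_sum ((univ : Finset (Fin n)).powersetCard j)
    ((univ : Finset (Fin n)).powersetCard (j+1)) (fun _ A => g A)]
  rw [Finset.mul_sum]
  apply Finset.sum_congr rfl
  intro A hA
  simp only [Finset.mem_powersetCard] at hA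
  rw [filter_subset_eq, Finset.sum_const, Finset.card_powersetCard, hA.2, nsmul_eq_mul]
  congr 1
  have : (j+1).choose j = j + 1 := by
    have := Nat.choose_symm (n := j+1) (k := 1) (by omega)
    simpa using this.symm
  rw [this]
  push_cast
  ring

/-- Key spectral bound: for a mean-zero function `g` on the `(j+1)`-sets, the squared norm of
its down-projection is at most `j (n - j - 1)` times its squared norm. -/
lemma key_bound {n : ℕ} : ∀ (j : ℕ) (g : Finset (Fin n) → ℝ),
    (∑ A ∈ (univ : Finset (Fin n)).powersetCard (j+1), g A) = 0 →
    ∑ C ∈ (univ : Finset (Fin n)).powersetCard j, (dOp n (j+1) g C)^2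
      ≤ j * ((n:ℝ) - j - 1) * ∑ A ∈ (univ : Finset (Fin n)).powersetCard (j+1), (g A)^2 := by
  intro j
  induction j with
  | zero =>
    intro g hg
    simp only [Finset.powersetCard_zero, Finset.sum_singleton]
    have h0 : dOp n 1 g ∅ = 0 := by
      rw [dOp, Finset.filter_true_of_mem (fun A _ => Finset.empty_subset A)]
      simpa using hg
    rw [h0]
    simp
  | succ j ih =>
    intro g hg
    by_cases hn : j + 2 ≤ n
    · -- main case
      set h : Finset (Fin n) → ℝ := dOp n (j+2) g with hh
      -- (a) h is mean-zero on level j+1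
      have ha : ∑ C ∈ (univ : Finset (Fin n)).powersetCard (j+1), h C = 0 := by
        rw [hh, dOp_total (j+1) g, hg, mul_zero]
      set X : ℝ := ∑ C ∈ (univ : Finset (Fin n)).powersetCard (j+1), (h C)^2 with hX
      have hXnn : 0 ≤ X := Finset.sum_nonneg (fun _ _ => sq_nonneg _)
      -- (b) X = ∑_A (uOp h A) * g A
      have hb : X = ∑ A ∈ (univ : Finset (Fin n)).powersetCard (j+2),
          (uOp n (j+1) h A) * g A := by
        rw [hX]
        have e1 : ∀ C ∈ (univ : Finset (Fin n)).powersetCard (j+1),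
            (h C)^2 = ∑ A ∈ ((univ : Finset (Fin n)).powersetCard (j+2)).filter
              (fun A => C ⊆ A), h C * g A := by
          intro C _
          rw [sq, hh]
          show dOp n (j+2) g C * dOp n (j+2) g C = _
          conv_lhs => rw [dOp]
          rw [Finset.mul_sum]
          apply Finset.sum_congr rfl
          intro A _
          show dOp n (j+2) g C * g A = h C * g A
          rw [hh]
        rw [Finset.sum_congr rfl e1,
          swap_sum ((univ : Finset (Fin n)).powersetCard (j+1))
            ((univ : Finset (Fin n)).powersetCard (j+2)) (fun C A => h C * g A)]
        apply Finset.sum_congr rfl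
        intro A _
        rw [uOp, Finset.sum_mul]
      -- (d) W = ∑_A (uOp h A)^2 ≤ (j+1)(n-j-2) X
      have hd : ∑ A ∈ (univ : Finset (Fin n)).powersetCard (j+2), (uOp n (j+1) h A)^2
          ≤ (j+1) * ((n:ℝ) - j - 2) * X := by
        have e2 : ∑ A ∈ (univ : Finset (Fin n)).powersetCard (j+2), (uOp n (j+1) h A)^2
            = ∑ C ∈ (univ : Finset (Fin n)).powersetCard (j+1),
                h C * dOp n (j+2) (uOp n (j+1) h) C := by
          have e3 : ∀ A ∈ (univ : Finset (Fin n)).powersetCard (j+2),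
              (uOp n (j+1) h A)^2 = ∑ C ∈ ((univ : Finset (Fin n)).powersetCard (j+1)).filter
                (fun C => C ⊆ A), h C * uOp n (j+1) h A := by
            intro A _
            rw [sq]
            nth_rewrite 1 [uOp]
            rw [Finset.sum_mul]
          rw [Finset.sum_congr rfl e3, ← swap_sum ((univ : Finset (Fin n)).powersetCard (j+1))
            ((univ : Finset (Fin n)).powersetCard (j+2))
            (fun C A => h C * uOp n (j+1) h A)]
          apply Finset.sum_congr rfl
          intro C _
          rw [dOp, Finset.mul_sum]
        rw [e2]
        have e4 : ∀ C ∈ (univ : Finset (Fin n)).powersetCard (j+1),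
            h C * dOp n (j+2) (uOp n (j+1) h) C
            = h C * uOp n j (dOp n (j+1) h) C + ((n : ℝ) - 2*(j+1)) * (h C)^2 := by
          intro C hC
          rw [du_comm j h C hC]
          ring
        rw [Finset.sum_congr rfl e4, Finset.sum_add_distrib, ← Finset.mul_sum]
        have e5 : ∑ C ∈ (univ : Finset (Fin n)).powersetCard (j+1),
            h C * uOp n j (dOp n (j+1) h) C
            = ∑ C' ∈ (univ : Finset (Fin n)).powersetCard j, (dOp n (j+1) h C')^2 := by
          have e6 : ∀ C ∈ (univ : Finset (Fin n)).powersetCard (j+1),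
              h C * uOp n j (dOp n (j+1) h) C
              = ∑ C' ∈ ((univ : Finset (Fin n)).powersetCard j).filter (fun C' => C' ⊆ C),
                  dOp n (j+1) h C' * h C := by
            intro C _
            rw [uOp, Finset.mul_sum]
            apply Finset.sum_congr rfl
            intro C' _
            ring
          rw [Finset.sum_congr rfl e6, ← swap_sum ((univ : Finset (Fin n)).powersetCard j)
            ((univ : Finset (Fin n)).powersetCard (j+1))
            (fun C' C => dOp n (j+1) h C' * h C)]
          apply Finset.sum_congr rfl
          intro C' _
          rw [sq]
          conv_rhs => rw [dOp]
          rw [← Finset.mul_sum]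
          congr 1
        rw [e5]
        have e7 := ih h ha
        have : (j : ℝ) * ((n:ℝ) - j - 1) * X + ((n : ℝ) - 2*(j+1)) * X
            = (j+1) * ((n:ℝ) - j - 2) * X := by ring
        calc ∑ C' ∈ (univ : Finset (Fin n)).powersetCard j, (dOp n (j+1) h C')^2
              + ((n : ℝ) - 2*(j+1)) * X
            ≤ (j : ℝ) * ((n:ℝ) - j - 1) * X + ((n : ℝ) - 2*(j+1)) * X := by
              apply add_le_add _ le_rfl
              exact e7
          _ = (j+1) * ((n:ℝ) - j - 2) * X := this
      -- (c)+(e): Cauchy-Schwarz and conclude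
      have hcs : X^2 ≤ (∑ A ∈ (univ : Finset (Fin n)).powersetCard (j+2), (uOp n (j+1) h A)^2)
          * ∑ A ∈ (univ : Finset (Fin n)).powersetCard (j+2), (g A)^2 := by
        rw [hb]
        exact Finset.sum_mul_sq_le_sq_mul_sq _ _ _
      have hg2nn : (0:ℝ) ≤ ∑ A ∈ (univ : Finset (Fin n)).powersetCard (j+2), (g A)^2 :=
        Finset.sum_nonneg (fun _ _ => sq_nonneg _)
      have hcoef : (0:ℝ) ≤ ((j:ℝ)+1) * ((n:ℝ) - j - 2) := by
        apply mul_nonneg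
        · positivity
        · have : (j:ℝ) + 2 ≤ (n:ℝ) := by exact_mod_cast hn
          linarith
      have hfinal : X^2 ≤ ((j+1) * ((n:ℝ) - j - 2)
          * ∑ A ∈ (univ : Finset (Fin n)).powersetCard (j+2), (g A)^2) * X := by
        calc X^2 ≤ (∑ A ∈ (univ : Finset (Fin n)).powersetCard (j+2), (uOp n (j+1) h A)^2)
            * ∑ A ∈ (univ : Finset (Fin n)).powersetCard (j+2), (g A)^2 := hcs
          _ ≤ ((j+1) * ((n:ℝ) - j - 2) * X)
              * ∑ A ∈ (univ : Finset (Fin n)).powersetCard (j+2), (g A)^2 :=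
            mul_le_mul_of_nonneg_right hd hg2nn
          _ = ((j+1) * ((n:ℝ) - j - 2)
              * ∑ A ∈ (univ : Finset (Fin n)).powersetCard (j+2), (g A)^2) * X := by ring
      have target : X ≤ (j+1) * ((n:ℝ) - j - 2)
          * ∑ A ∈ (univ : Finset (Fin n)).powersetCard (j+2), (g A)^2 := by
        rcases eq_or_lt_of_le hXnn with hX0 | hXpos
        · rw [← hX0]
          exact mul_nonneg hcoef hg2nn
        · have := hfinal
          rw [sq] at this
          exact le_of_mul_le_mul_right this hXpos
      calc ∑ C ∈ (univ : Finset (Fin n)).powersetCard (j+1), (dOp n (j+2) g C)^2 = X := by rw [hX]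
        _ ≤ (j+1) * ((n:ℝ) - j - 2)
            * ∑ A ∈ (univ : Finset (Fin n)).powersetCard (j+2), (g A)^2 := target
        _ = (↑(j+1)) * ((n:ℝ) - ↑(j+1) - 1)
            * ∑ A ∈ (univ : Finset (Fin n)).powersetCard (j+1+1), (g A)^2 := by
          push_cast; ring_nf
    · -- degenerate case: no (j+2)-sets
      push_neg at hn
      have hempty : (univ : Finset (Fin n)).powersetCard (j+2) = ∅ := by
        apply Finset.powersetCard_eq_empty.mpr
        simpa using hn
      have hzero : ∀ C, dOp n (j+2) g C = 0 := by
        intro C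
        rw [dOp, hempty]
        simp
      simp only [hzero, hempty]
      simp

/-- The Bey/de Caen-type bound on the sum of squared codegrees of a `(p+1)`-uniform
hypergraph. -/
lemma co2_bound {n p : ℕ} (hpn : p + 1 ≤ n) (G : Finset (Finset (Fin n)))
    (hG : ∀ e ∈ G, e.card = p + 1) :
    ∑ E ∈ (univ : Finset (Fin n)).powersetCard p, ((G.filter (fun A => E ⊆ A)).card : ℝ)^2
      ≤ p * ((n:ℝ) - p - 1) * G.card
        + n * (G.card : ℝ)^2 / ((n.choose (p+1) : ℝ)) := by
  have hpn' : p ≤ n := by omega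
  set e : ℝ := (G.card : ℝ) with he
  have henn : 0 ≤ e := by positivity
  set Cnk : ℝ := ((n.choose (p+1) : ℕ) : ℝ) with hCnk
  have hCnkpos : 0 < Cnk := by
    rw [hCnk]
    exact_mod_cast Nat.choose_pos hpn
  set Np : ℝ := ((n.choose p : ℕ) : ℝ) with hNp
  set m : ℝ := (n : ℝ) - p with hm
  have hmcast : ((n - p : ℕ) : ℝ) = m := by
    rw [hm, Nat.cast_sub hpn']
  have hchooseid : Cnk * (p+1) = Np * m := by
    rw [hCnk, hNp, ← hmcast]
    exact_mod_cast Nat.choose_succ_right_eq n p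
  -- indicator function and its centered version
  set f : Finset (Fin n) → ℝ := fun A => if A ∈ G then 1 else 0 with hf
  set c : ℝ := e / Cnk with hc
  set g : Finset (Fin n) → ℝ := fun A => f A - c with hgdef
  have hGsub : G ⊆ (univ : Finset (Fin n)).powersetCard (p+1) := by
    intro A hA
    rw [Finset.mem_powersetCard]
    exact ⟨subset_univ A, hG A hA⟩
  have hcardpc : ((univ : Finset (Fin n)).powersetCard (p+1)).card = n.choose (p+1) := by
    rw [Finset.card_powersetCard, card_univ, Fintype.card_fin]
  have hfsum : ∑ A ∈ (univ : Finset (Fin n)).powersetCard (p+1), f A = e := by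
    rw [hf, he]
    rw [Finset.sum_boole]
    congr 1
    rw [Finset.filter_mem_eq_inter, Finset.inter_eq_right.mpr hGsub]
  have hf2sum : ∑ A ∈ (univ : Finset (Fin n)).powersetCard (p+1), (f A)^2 = e := by
    rw [← hfsum]
    apply Finset.sum_congr rfl
    intro A _
    rw [hf]
    by_cases hA : A ∈ G <;> simp [hA]
  have hmean : ∑ A ∈ (univ : Finset (Fin n)).powersetCard (p+1), g A = 0 := by
    rw [hgdef]
    simp only [Finset.sum_sub_distrib, hfsum, Finset.sum_const, hcardpc, nsmul_eq_mul]
    rw [hc, ← hCnk]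
    field_simp
    ring
  -- degree function identification
  have hdeg : ∀ E : Finset (Fin n),
      dOp n (p+1) f E = ((G.filter (fun A => E ⊆ A)).card : ℝ) := by
    intro E
    rw [dOp, hf]
    rw [Finset.sum_boole]
    have hseteq : ((((univ : Finset (Fin n)).powersetCard (p+1)).filter
        (fun A => E ⊆ A)).filter (fun A => A ∈ G)) = G.filter (fun A => E ⊆ A) := by
      ext A
      simp only [Finset.mem_filter]
      constructor
      · rintro ⟨⟨-, h2⟩, h3⟩
        exact ⟨h3, h2⟩
      · rintro ⟨h1, h2⟩
        exact ⟨⟨Finset.mem_powersetCard.mpr ⟨subset_univ A, hG A h1⟩, h2⟩, h1⟩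
    rw [hseteq]
  -- dOp of g on a p-set
  have hdg : ∀ E ∈ (univ : Finset (Fin n)).powersetCard p,
      dOp n (p+1) g E = ((G.filter (fun A => E ⊆ A)).card : ℝ) - m * c := by
    intro E hE
    rw [Finset.mem_powersetCard] at hE
    have := hdeg E
    rw [dOp, hgdef] at *
    rw [Finset.sum_sub_distrib, Finset.sum_const, nsmul_eq_mul]
    rw [this]
    congr 1
    have hcnt := card_filter_superset (p+1) E (by omega)
    rw [hE.2] at hcnt
    rw [hcnt]
    have h1 : p + 1 - p = 1 := by omega
    rw [h1, Nat.choose_one_right, hmcast]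
  -- sum of degrees
  have hdsum : ∑ E ∈ (univ : Finset (Fin n)).powersetCard p,
      ((G.filter (fun A => E ⊆ A)).card : ℝ) = (p+1) * e := by
    have := dOp_total p f
    rw [hfsum] at this
    rw [← this]
    apply Finset.sum_congr rfl
    intro E _
    rw [hdeg E]
  -- sum of g²
  have hg2 : ∑ A ∈ (univ : Finset (Fin n)).powersetCard (p+1), (g A)^2 = e - e^2/Cnk := by
    rw [hgdef]
    simp only [sub_sq]
    rw [Finset.sum_add_distrib, Finset.sum_sub_distrib, hf2sum, ← Finset.sum_mul,
      ← Finset.mul_sum, hfsum, Finset.sum_const, hcardpc, nsmul_eq_mul]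
    rw [hc, ← hCnk]
    field_simp
    ring
  -- apply key bound
  have hkey := key_bound p g hmean
  rw [hg2] at hkey
  -- expand the variance
  have hNpcard : (((univ : Finset (Fin n)).powersetCard p).card : ℝ) = Np := by
    rw [Finset.card_powersetCard, card_univ, Fintype.card_fin, hNp]
  have hexpand : ∑ E ∈ (univ : Finset (Fin n)).powersetCard p, (dOp n (p+1) g E)^2
      = (∑ E ∈ (univ : Finset (Fin n)).powersetCard p,
          ((G.filter (fun A => E ⊆ A)).card : ℝ)^2)
        - 2 * (m*c) * ((p+1)*e) + Np * (m*c)^2 := by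
    rw [show (∑ E ∈ (univ : Finset (Fin n)).powersetCard p, (dOp n (p+1) g E)^2)
        = ∑ E ∈ (univ : Finset (Fin n)).powersetCard p,
          (((G.filter (fun A => E ⊆ A)).card : ℝ) - m*c)^2 from
      Finset.sum_congr rfl (fun E hE => by rw [hdg E hE])]
    have expand2 : ∀ E ∈ (univ : Finset (Fin n)).powersetCard p,
        (((G.filter (fun A => E ⊆ A)).card : ℝ) - m*c)^2
        = ((G.filter (fun A => E ⊆ A)).card : ℝ)^2
          - (2*(m*c)) * ((G.filter (fun A => E ⊆ A)).card : ℝ) + (m*c)^2 := by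
      intro E _
      ring
    rw [Finset.sum_congr rfl expand2, Finset.sum_add_distrib, Finset.sum_sub_distrib,
      Finset.sum_const, nsmul_eq_mul, hNpcard, ← Finset.mul_sum, hdsum]
  -- put it together
  have hmain : (∑ E ∈ (univ : Finset (Fin n)).powersetCard p,
      ((G.filter (fun A => E ⊆ A)).card : ℝ)^2)
      ≤ p * ((n:ℝ) - p - 1) * (e - e^2/Cnk) + 2 * (m*c) * ((p+1)*e) - Np * (m*c)^2 := by
    have := hexpand ▸ hkey
    linarith
  -- final algebra
  have halg : p * ((n:ℝ) - p - 1) * (e - e^2/Cnk) + 2 * (m*c) * ((p+1)*e) - Np * (m*c)^2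
      = p * ((n:ℝ) - p - 1) * e + n * e^2 / Cnk := by
    have hCnkne : Cnk ≠ 0 := ne_of_gt hCnkpos
    have hNpm : Np * m = Cnk * ((p:ℝ)+1) := hchooseid.symm
    have h1 : Np * (m*c)^2 = ((p:ℝ)+1) * m * e^2 / Cnk := by
      have e1 : Np * (m*c)^2 = (Np * m) * m * c^2 := by ring
      rw [e1, hNpm, hc]
      field_simp
    rw [h1, hc, hm]
    field_simp
    ring
  calc (∑ E ∈ (univ : Finset (Fin n)).powersetCard p,
      ((G.filter (fun A => E ⊆ A)).card : ℝ)^2)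
      ≤ p * ((n:ℝ) - p - 1) * (e - e^2/Cnk) + 2 * (m*c) * ((p+1)*e) - Np * (m*c)^2 := hmain
    _ = p * ((n:ℝ) - p - 1) * e + n * e^2 / Cnk := halg

/-- General bound on the codegree squared density: for a family of `k`-uniform hypergraph
patterns with Turán density `π > 0` and codegree squared density `σ`, one has
`σ ≤ π(π/k + 1 − 1/k)`. Here `ex n` is the maximum number of edges and `exco n` the maximum
codegree squared sum of a pattern-free `k`-uniform hypergraph on `n` vertices, and
`π` and `σ` are the corresponding scaled limits. -/
theorem general_sigma_bound (k : ℕ) (hk : 1 ≤ k)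
    (ι : Type*) (m : ι → ℕ) (pat : ∀ i, Finset (Finset (Fin (m i))))
    (hpat : ∀ i, ∀ e ∈ pat i, e.card = k)
    (ex exco : ℕ → ℕ)
    (hex : ∀ n : ℕ, IsGreatest {c : ℕ | ∃ G : Finset (Finset (Fin n)),
      (∀ e ∈ G, e.card = k) ∧
      (¬ ∃ i, ∃ f : Fin (m i) → Fin n, Function.Injective f ∧
        ∀ e ∈ pat i, e.image f ∈ G) ∧
      G.card = c} (ex n))
    (hexco : ∀ n : ℕ, IsGreatest {c : ℕ | ∃ G : Finset (Finset (Fin n)),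
      (∀ e ∈ G, e.card = k) ∧
      (¬ ∃ i, ∃ f : Fin (m i) → Fin n, Function.Injective f ∧
        ∀ e ∈ pat i, e.image f ∈ G) ∧
      (∑ E ∈ Finset.univ.powersetCard (k - 1), ((G.filter fun A => E ⊆ A).card) ^ 2) = c}
      (exco n))
    (π σ : ℝ)
    (hπ : Tendsto (fun n : ℕ => (ex n : ℝ) / (n.choose k : ℝ)) atTop (nhds π))
    (hσ : Tendsto (fun n : ℕ =>
      (exco n : ℝ) / ((n.choose (k - 1) : ℝ) * ((n : ℝ) - k + 1) ^ 2)) atTop (nhds σ))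
    (hπpos : 0 < π) :
    σ ≤ π * (π / k + 1 - 1 / k) := by
  obtain ⟨p, rfl⟩ : ∃ p, k = p + 1 := ⟨k - 1, by omega⟩
  have hk1 : (p + 1 : ℕ) - 1 = p := by omega
  -- choose extremal hypergraphs for exco
  choose G hG1 hG2 hG3 using fun n => (hexco n).1
  -- their edge count is at most ex n
  have hEdge : ∀ n, (G n).card ≤ ex n := fun n => (hex n).2 ⟨G n, hG1 n, hG2 n, rfl⟩
  -- the eventual bound
  have hbound : ∀ n : ℕ, p + 1 ≤ n →
      (exco n : ℝ) ≤ p * ((n:ℝ) - p - 1) * (ex n) + n * ((ex n : ℕ) : ℝ)^2 / ((n.choose (p+1) : ℝ)) := by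
    intro n hn
    have h1 : (exco n : ℝ)
        = ∑ E ∈ (univ : Finset (Fin n)).powersetCard p, (((G n).filter (fun A => E ⊆ A)).card : ℝ)^2 := by
      rw [← hG3 n, hk1]
      push_cast
      rfl
    have h2 := co2_bound hn (G n) (hG1 n)
    have h3 : (p : ℝ) * ((n:ℝ) - p - 1) * ((G n).card) + n * ((G n).card : ℝ)^2 / ((n.choose (p+1) : ℝ))
        ≤ p * ((n:ℝ) - p - 1) * (ex n) + n * ((ex n : ℕ) : ℝ)^2 / ((n.choose (p+1) : ℝ)) := by
      have hc1 : ((G n).card : ℝ) ≤ ((ex n : ℕ) : ℝ) := by exact_mod_cast hEdge n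
      have hc0 : (0:ℝ) ≤ ((G n).card : ℝ) := by positivity
      have hcoef : (0:ℝ) ≤ (p : ℝ) * ((n:ℝ) - p - 1) := by
        apply mul_nonneg (by positivity)
        have : ((p:ℝ) + 1) ≤ (n:ℝ) := by exact_mod_cast hn
        linarith
      have hsq : ((G n).card : ℝ)^2 ≤ ((ex n : ℕ) : ℝ)^2 := by
        apply pow_le_pow_left₀ hc0 hc1
      have hdenpos : (0:ℝ) < ((n.choose (p+1) : ℕ) : ℝ) := by
        exact_mod_cast Nat.choose_pos hn
      have t1 : (p : ℝ) * ((n:ℝ) - p - 1) * ((G n).card) ≤ (p : ℝ) * ((n:ℝ) - p - 1) * (ex n) :=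
        mul_le_mul_of_nonneg_left hc1 hcoef
      have t2 : (n:ℝ) * ((G n).card : ℝ)^2 / ((n.choose (p+1) : ℝ))
          ≤ (n:ℝ) * ((ex n : ℕ) : ℝ)^2 / ((n.choose (p+1) : ℝ)) := by
        apply (div_le_div_iff_of_pos_right hdenpos).mpr
        apply mul_le_mul_of_nonneg_left hsq (by positivity)
      linarith
    calc (exco n : ℝ) = _ := h1
      _ ≤ _ := h2
      _ ≤ _ := h3
  -- the bounding sequence
  set b : ℕ → ℝ := fun n =>
    ((p : ℝ) * ((n:ℝ) - p - 1) * (ex n) + n * ((ex n : ℕ) : ℝ)^2 / ((n.choose (p+1) : ℝ)))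
      / ((n.choose ((p+1) - 1) : ℝ) * ((n : ℝ) - ((p+1 : ℕ) : ℝ) + 1) ^ 2) with hbdef
  -- eventual comparison
  have hle : ∀ᶠ n in atTop, (exco n : ℝ) / ((n.choose ((p+1) - 1) : ℝ) * ((n : ℝ) - ((p+1 : ℕ) : ℝ) + 1) ^ 2)
      ≤ b n := by
    filter_upwards [eventually_ge_atTop (p+1)] with n hn
    have hNpos : (0:ℝ) < ((n.choose ((p+1) - 1) : ℕ) : ℝ) := by
      rw [hk1]
      exact_mod_cast Nat.choose_pos (by omega)
    have hmpos : (0:ℝ) < ((n : ℝ) - ((p+1 : ℕ) : ℝ) + 1) := by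
      have : ((p:ℝ) + 1) ≤ (n:ℝ) := by exact_mod_cast hn
      push_cast
      linarith
    have hdpos : (0:ℝ) < ((n.choose ((p+1) - 1) : ℝ) * ((n : ℝ) - ((p+1 : ℕ) : ℝ) + 1) ^ 2) := by
      apply mul_pos hNpos
      positivity
    rw [hbdef]
    exact (div_le_div_iff_of_pos_right hdpos).mpr (hbound n hn)
  -- rewrite b in terms of the density sequence
  have hbeq : ∀ᶠ n in atTop, b n
      = ((p:ℝ)/(p+1)) * (((ex n : ℝ) / (n.choose (p+1) : ℝ)) * (((n:ℝ) - p - 1)/((n:ℝ) - p)))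
        + (1/((p:ℝ)+1)) * ((((ex n : ℝ) / (n.choose (p+1) : ℝ)))^2 * ((n:ℝ)/((n:ℝ) - p))) := by
    filter_upwards [eventually_ge_atTop (p+1)] with n hn
    have hppn : p ≤ n := by omega
    have hCpos : (0:ℝ) < ((n.choose (p+1) : ℕ) : ℝ) := by
      exact_mod_cast Nat.choose_pos hn
    have hNpos : (0:ℝ) < ((n.choose p : ℕ) : ℝ) := by
      exact_mod_cast Nat.choose_pos hppn
    have hmpos : (0:ℝ) < ((n:ℝ) - p) := by
      have : ((p:ℝ) + 1) ≤ (n:ℝ) := by exact_mod_cast hn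
      linarith
    have hid : ((n.choose (p+1) : ℕ) : ℝ) * ((p:ℝ)+1) = ((n.choose p : ℕ) : ℝ) * ((n:ℝ) - p) := by
      have := Nat.choose_succ_right_eq n p
      have hcast : ((n - p : ℕ) : ℝ) = (n:ℝ) - p := by
        rw [Nat.cast_sub hppn]
      rw [← hcast]
      exact_mod_cast this
    rw [hbdef]
    simp only [hk1]
    have hshift : ((n : ℝ) - ((p+1 : ℕ) : ℝ) + 1) = (n:ℝ) - p := by push_cast; ring
    rw [hshift]
    have hden : ((n.choose p : ℕ) : ℝ) * ((n:ℝ) - p)^2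
        = (((n.choose (p+1) : ℕ) : ℝ) * ((p:ℝ)+1)) * ((n:ℝ) - p) := by
      rw [hid]; ring
    rw [hden]
    field_simp
  -- limits of the rational correction factors
  have hnp : Tendsto (fun n : ℕ => (n:ℝ) - p) atTop atTop := by
    have := tendsto_atTop_add_const_right atTop (-(p:ℝ)) tendsto_natCast_atTop_atTop
    simpa [sub_eq_add_neg] using this
  have hinv : Tendsto (fun n : ℕ => ((n:ℝ) - p)⁻¹) atTop (nhds 0) := hnp.inv_tendsto_atTop
  have hr1 : Tendsto (fun n : ℕ => ((n:ℝ) - p - 1)/((n:ℝ) - p)) atTop (nhds 1) := by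
    have h := (tendsto_const_nhds : Tendsto (fun _ : ℕ => (1:ℝ)) atTop (nhds 1)).sub hinv
    rw [sub_zero] at h
    apply h.congr'
    filter_upwards [eventually_ge_atTop (p+1)] with n hn
    have hmpos : (0:ℝ) < ((n:ℝ) - p) := by
      have : ((p:ℝ) + 1) ≤ (n:ℝ) := by exact_mod_cast hn
      linarith
    field_simp
  have hr2 : Tendsto (fun n : ℕ => (n:ℝ)/((n:ℝ) - p)) atTop (nhds 1) := by
    have h := (tendsto_const_nhds : Tendsto (fun _ : ℕ => (1:ℝ)) atTop (nhds 1)).add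
      (hinv.const_mul (p:ℝ))
    rw [mul_zero, add_zero] at h
    apply h.congr'
    filter_upwards [eventually_ge_atTop (p+1)] with n hn
    have hmpos : (0:ℝ) < ((n:ℝ) - p) := by
      have : ((p:ℝ) + 1) ≤ (n:ℝ) := by exact_mod_cast hn
      linarith
    field_simp
    ring
  -- limit of b
  have hblim : Tendsto b atTop
      (nhds (((p:ℝ)/(p+1)) * (π * 1) + (1/((p:ℝ)+1)) * (π^2 * 1))) := by
    have hbeq' : (fun n : ℕ =>
        ((p:ℝ)/(p+1)) * (((ex n : ℝ) / (n.choose (p+1) : ℝ)) * (((n:ℝ) - p - 1)/((n:ℝ) - p)))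
          + (1/((p:ℝ)+1)) * ((((ex n : ℝ) / (n.choose (p+1) : ℝ)))^2 * ((n:ℝ)/((n:ℝ) - p))))
        =ᶠ[atTop] b := Filter.EventuallyEq.symm hbeq
    apply Tendsto.congr' hbeq'
    apply Tendsto.add
    · exact Tendsto.const_mul _ (hπ.mul hr1)
    · exact Tendsto.const_mul _ ((hπ.pow 2).mul hr2)
  -- conclude
  have hfin : σ ≤ ((p:ℝ)/(p+1)) * (π * 1) + (1/((p:ℝ)+1)) * (π^2 * 1) :=
    le_of_tendsto_of_tendsto hσ hblim hle
  have : ((p:ℝ)/(p+1)) * (π * 1) + (1/((p:ℝ)+1)) * (π^2 * 1)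
      = π * (π / ((p+1 : ℕ) : ℝ) + 1 - 1 / ((p+1 : ℕ) : ℝ)) := by
    have hp1 : ((p:ℝ) + 1) ≠ 0 := by positivity
    push_cast
    field_simp
    ring
  rw [this] at hfin
  exact hfin
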